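/- Every unital subalgebra 𝒜 ⊆ M_n(ℝ) whose underlying set is the linear span of a multiplicatively closed set of matrix units E_{ij} (i ≤ j) containing all diagonal matrix units is generated as a unital algebra by two entrywise nonnegative matrices A, B with AB − BA entrywise nonnegative. -/

import Mathlib

open Matrix

lemma aeval_diagonal {n : ℕ} (d : Fin n → ℝ) (p : Polynomial ℝ) :
    Polynomial.aeval (Matrix.diagonal d) p =
      Matrix.diagonal (fun i => Polynomial.eval (d i) p) := by
  induction p using Polynomial.induction_on' with
  | add p q hp hq =>
      simp [hp, hq, Matrix.diagonal_add]
  | monomial m a =>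
      simp [Polynomial.aeval_monomial, Matrix.diagonal_pow, Matrix.diagonal_mul_diagonal,
        Matrix.algebraMap_eq_diagonal]

lemma diag_mul_mul_diag {n : ℕ} (i j : Fin n) (M : Matrix (Fin n) (Fin n) ℝ) :
    Matrix.single i i 1 * M * Matrix.single j j 1 =
      Matrix.single i j (M i j) := by
  ext a b
  simp [Matrix.mul_apply, Matrix.single, Finset.sum_ite_eq, ite_and]
  aesop

/-- Every upper-triangular matrix incidence algebra (the span of a set of matrix units
`E_{ij}`, `i ≤ j`, containing all diagonal units) is generated by two entrywise
nonnegative matrices with entrywise nonnegative commutator. -/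
theorem stmt15 (n : ℕ) (𝒜 : Subalgebra ℝ (Matrix (Fin n) (Fin n) ℝ))
    (S : Set (Fin n × Fin n))
    (hupper : ∀ p ∈ S, p.1 ≤ p.2)
    (hdiagS : ∀ i : Fin n, (i, i) ∈ S)
    (hspan : (𝒜 : Set (Matrix (Fin n) (Fin n) ℝ)) =
      (Submodule.span ℝ ((fun p : Fin n × Fin n =>
        Matrix.single p.1 p.2 (1 : ℝ)) '' S) : Set (Matrix (Fin n) (Fin n) ℝ))) :
    ∃ A B : Matrix (Fin n) (Fin n) ℝ,
      (∀ i j, 0 ≤ A i j) ∧ (∀ i j, 0 ≤ B i j) ∧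
      (∀ i j, 0 ≤ (A * B - B * A) i j) ∧
      Algebra.adjoin ℝ {A, B} = 𝒜 := by
  classical
  set d : Fin n → ℝ := fun i => (n : ℝ) - i with hd
  have hdpos : ∀ i : Fin n, 0 ≤ d i := by
    intro i
    have : (i : ℝ) < n := by exact_mod_cast i.isLt
    simp only [hd]; linarith
  have hdinj : Function.Injective d := by
    intro i j h
    simp only [hd] at h
    have : (i : ℝ) = j := by linarith
    exact Fin.ext (by exact_mod_cast this)
  set A : Matrix (Fin n) (Fin n) ℝ := Matrix.diagonal d with hA
  set T : Finset (Fin n × Fin n) := S.toFinset with hT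
  set B : Matrix (Fin n) (Fin n) ℝ :=
    ∑ p ∈ T, Matrix.single p.1 p.2 1 with hB
  have hBapply : ∀ i j, B i j = if (i, j) ∈ S then 1 else 0 := by
    intro i j
    rw [hB, Matrix.sum_apply]
    have hterm : ∀ p : Fin n × Fin n,
        (Matrix.single p.1 p.2 (1 : ℝ)) i j = if p = (i, j) then 1 else 0 := by
      rintro ⟨a, b⟩
      simp [Matrix.single, Prod.ext_iff]
    rw [Finset.sum_congr rfl (fun p _ => hterm p),
      Finset.sum_ite_eq' T (i, j) (fun _ => (1 : ℝ))]
    simp [hT]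
  have hBnn : ∀ i j, 0 ≤ B i j := by
    intro i j; rw [hBapply]; positivity
  have hAnn : ∀ i j, 0 ≤ A i j := by
    intro i j
    rcases eq_or_ne i j with rfl | h
    · simpa [hA] using hdpos i
    · simp [hA, Matrix.diagonal_apply_ne _ h]
  -- commutator
  have hcomm : ∀ i j, 0 ≤ (A * B - B * A) i j := by
    intro i j
    have hval : (A * B - B * A) i j = (d i - d j) * B i j := by
      simp [hA, Matrix.diagonal_mul, Matrix.mul_diagonal]
      ring
    rw [hval]
    rcases eq_or_ne (B i j) 0 with h0 | h0
    · simp [h0]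
    · have hmem : (i, j) ∈ S := by
        by_contra hc
        simp [hBapply, hc] at h0
      have hle : (i : ℕ) ≤ (j : ℕ) := hupper _ hmem
      have hle' : (i : ℝ) ≤ (j : ℝ) := by exact_mod_cast hle
      have hdij : 0 ≤ d i - d j := by simp only [hd]; linarith
      have := hBnn i j
      positivity
  refine ⟨A, B, hAnn, hBnn, hcomm, ?_⟩
  -- diagonal units are in the adjoin
  have hdiag_mem : ∀ i : Fin n, Matrix.single i i 1 ∈ Algebra.adjoin ℝ {A, B} := by
    intro i
    have key : Polynomial.aeval A (Lagrange.basis Finset.univ d i) =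
        Matrix.single i i 1 := by
      rw [hA, aeval_diagonal]
      ext a b
      rcases eq_or_ne a b with rfl | hab
      · rcases eq_or_ne a i with rfl | hai
        · simp [Lagrange.eval_basis_self (hdinj.injOn) (Finset.mem_univ a),
            Matrix.single]
        · simp [Lagrange.eval_basis_of_ne (Ne.symm hai) (Finset.mem_univ a),
            Matrix.single, Ne.symm hai]
      · have hne : ¬ (i = a ∧ i = b) := by rintro ⟨rfl, rfl⟩; exact hab rfl
        simp [Matrix.diagonal_apply_ne _ hab, Matrix.single, hne]
    have hsingle : Polynomial.aeval A (Lagrange.basis Finset.univ d i) ∈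
        Algebra.adjoin ℝ ({A} : Set (Matrix (Fin n) (Fin n) ℝ)) := by
      rw [Algebra.adjoin_singleton_eq_range_aeval]
      exact ⟨Lagrange.basis Finset.univ d i, rfl⟩
    rw [← key]
    exact Algebra.adjoin_mono (by simp) hsingle
  -- every generator is in the adjoin
  have hgen_mem : ∀ p ∈ S,
      Matrix.single p.1 p.2 (1 : ℝ) ∈ Algebra.adjoin ℝ {A, B} := by
    rintro ⟨i, j⟩ hp
    have hBmem : B ∈ Algebra.adjoin ℝ {A, B} :=
      Algebra.subset_adjoin (by simp)
    have hmm : Matrix.single i i 1 * B * Matrix.single j j 1 ∈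
        Algebra.adjoin ℝ {A, B} :=
      mul_mem (mul_mem (hdiag_mem i) hBmem) (hdiag_mem j)
    rwa [diag_mul_mul_diag, hBapply, if_pos hp] at hmm
  -- matrices supported on S are in the span
  have hmem_span : ∀ M : Matrix (Fin n) (Fin n) ℝ, (∀ i j, (i, j) ∉ S → M i j = 0) →
      M ∈ Submodule.span ℝ ((fun p : Fin n × Fin n =>
        Matrix.single p.1 p.2 (1 : ℝ)) '' S) := by
    intro M hM
    rw [Matrix.matrix_eq_sum_single M]
    apply Submodule.sum_mem; intro i _
    apply Submodule.sum_mem; intro j _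
    by_cases h : (i, j) ∈ S
    · rw [show Matrix.single i j (M i j) = M i j • Matrix.single i j (1 : ℝ) by
        rw [Matrix.smul_single, smul_eq_mul, mul_one]]
      exact Submodule.smul_mem _ _ (Submodule.subset_span ⟨(i, j), h, rfl⟩)
    · rw [hM i j h, Matrix.single_zero]
      exact Submodule.zero_mem _
  apply le_antisymm
  · -- adjoin ≤ 𝒜
    apply Algebra.adjoin_le
    rintro x (rfl | rfl)
    · show A ∈ (𝒜 : Set _)
      rw [hspan]
      apply hmem_span
      intro i j hij
      rcases eq_or_ne i j with rfl | h
      · exact absurd (hdiagS i) hij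
      · simp [hA, Matrix.diagonal_apply_ne _ h]
    · show B ∈ (𝒜 : Set _)
      rw [hspan]
      apply hmem_span
      intro i j hij
      simp [hBapply, hij]
  · -- 𝒜 ≤ adjoin
    intro x hx
    have hx' : x ∈ Submodule.span ℝ ((fun p : Fin n × Fin n =>
        Matrix.single p.1 p.2 (1 : ℝ)) '' S) := by
      have hxs : x ∈ (𝒜 : Set _) := hx
      rw [hspan] at hxs
      exact hxs
    have hle : Submodule.span ℝ ((fun p : Fin n × Fin n =>
        Matrix.single p.1 p.2 (1 : ℝ)) '' S) ≤
        Subalgebra.toSubmodule (Algebra.adjoin ℝ {A, B}) := by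
      rw [Submodule.span_le]
      rintro y ⟨p, hp, rfl⟩
      exact hgen_mem p hp
    exact hle hx'
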